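/- Among all planar regions of a given area, the disk centered at the facility minimizes the average Euclidean distance to the facility: for every r > 0 and every Lebesgue-measurable set S ⊆ ℝ² whose two-dimensional Lebesgue measure equals π·r² (the area of the disk B(0,r)), one has ∫_S ‖x‖ dx ≥ ∫_{B(0,r)} ‖x‖ dx = (2/3)·π·r³. -/

import Mathlib

open MeasureTheory

noncomputable section

local notation "E" => EuclideanSpace ℝ (Fin 2)

lemma volB (t : ℝ) (ht : 0 ≤ t) :
    volume (Metric.closedBall (0 : E) t) = ENNReal.ofReal (Real.pi * t ^ 2) := by
  rw [EuclideanSpace.volume_closedBall]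
  have h2 : (((2:ℕ):ℝ) / 2 + 1) = 2 := by norm_num
  rw [Fintype.card_fin, h2, Real.Gamma_two]
  rw [Real.sq_sqrt Real.pi_pos.le, div_one, ← ENNReal.ofReal_pow ht,
    ← ENNReal.ofReal_mul (by positivity)]
  ring_nf

lemma inter_eq_diff (A : Set E) (t : ℝ) :
    {x : E | t < ‖x‖} ∩ A = A \ Metric.closedBall (0 : E) t := by
  ext x
  simp only [Set.mem_inter_iff, Set.mem_setOf_eq, Set.mem_diff,
    mem_closedBall_zero_iff, not_le]
  tauto

lemma layercake (A : Set E) (hA : MeasurableSet A) :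
    (∫⁻ x in A, ENNReal.ofReal ‖x‖) =
      ∫⁻ t in Set.Ioi (0 : ℝ), volume (A \ Metric.closedBall (0 : E) t) := by
  rw [lintegral_eq_lintegral_meas_lt (volume.restrict A)
    (Filter.Eventually.of_forall fun x => norm_nonneg x)
    (continuous_norm.aemeasurable)]
  refine lintegral_congr fun t => ?_
  rw [Measure.restrict_apply (measurableSet_lt measurable_const measurable_norm)]
  rw [inter_eq_diff]

theorem disk_minimizes_average_distance
    (r : ℝ) (hr : 0 < r)
    (S : Set (EuclideanSpace ℝ (Fin 2))) (hS : MeasurableSet S)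
    (hvol : volume S = ENNReal.ofReal (Real.pi * r ^ 2)) :
    (∫⁻ x in Metric.closedBall (0 : EuclideanSpace ℝ (Fin 2)) r, ENNReal.ofReal ‖x‖)
      = ENNReal.ofReal (2 / 3 * Real.pi * r ^ 3) ∧
    (∫⁻ x in Metric.closedBall (0 : EuclideanSpace ℝ (Fin 2)) r, ENNReal.ofReal ‖x‖)
      ≤ ∫⁻ x in S, ENNReal.ofReal ‖x‖ := by
  have hball : ∀ t : ℝ, 0 < t →
      volume (Metric.closedBall (0 : E) r \ Metric.closedBall (0 : E) t)
        = ENNReal.ofReal (Real.pi * r ^ 2 - Real.pi * t ^ 2) := by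
    intro t ht
    rcases le_or_gt t r with htr | htr
    · rw [measure_diff (Metric.closedBall_subset_closedBall htr)
        measurableSet_closedBall.nullMeasurableSet
        (by rw [volB t ht.le]; exact ENNReal.ofReal_ne_top),
        volB r hr.le, volB t ht.le,
        ENNReal.ofReal_sub _ (by positivity)]
    · rw [Set.diff_eq_empty.mpr (Metric.closedBall_subset_closedBall htr.le),
        measure_empty]
      rw [eq_comm, ENNReal.ofReal_eq_zero]
      nlinarith [mul_pos Real.pi_pos (show (0:ℝ) < t ^ 2 - r ^ 2 by nlinarith)]
  constructor
  · rw [layercake _ measurableSet_closedBall]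
    have hcong : (∫⁻ t in Set.Ioi (0:ℝ),
        volume (Metric.closedBall (0 : E) r \ Metric.closedBall (0 : E) t)) =
        ∫⁻ t in Set.Ioi (0:ℝ), ENNReal.ofReal (Real.pi * r ^ 2 - Real.pi * t ^ 2) := by
      refine setLIntegral_congr_fun measurableSet_Ioi
        (fun t ht => hball t ht)
    rw [hcong]
    have hsplit : Set.Ioi (0:ℝ) = Set.Ioc 0 r ∪ Set.Ioi r :=
      (Set.Ioc_union_Ioi_eq_Ioi hr.le).symm
    rw [hsplit, lintegral_union measurableSet_Ioi (Set.Ioc_disjoint_Ioi le_rfl)]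
    have h2 : (∫⁻ t in Set.Ioi r, ENNReal.ofReal (Real.pi * r ^ 2 - Real.pi * t ^ 2)) = 0 := by
      rw [setLIntegral_congr_fun measurableSet_Ioi
        (fun t (ht : r < t) => by
          rw [ENNReal.ofReal_eq_zero]
          nlinarith [mul_pos Real.pi_pos (show (0:ℝ) < t ^ 2 - r ^ 2 by nlinarith)])]
      simp
    rw [h2, add_zero]
    have hint : IntegrableOn (fun t : ℝ => Real.pi * r ^ 2 - Real.pi * t ^ 2)
        (Set.Ioc 0 r) := by
      apply Continuous.integrableOn_Ioc
      continuity
    rw [← ofReal_integral_eq_lintegral_ofReal hint]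
    · congr 1
      rw [← intervalIntegral.integral_of_le hr.le]
      have : ∫ t in (0:ℝ)..r, (Real.pi * r ^ 2 - Real.pi * t ^ 2) =
          Real.pi * r ^ 2 * r - Real.pi * (r ^ 3 / 3) := by
        rw [intervalIntegral.integral_sub (by apply intervalIntegrable_const)
          ((intervalIntegral.intervalIntegrable_pow 2).const_mul _)]
        rw [intervalIntegral.integral_const, intervalIntegral.integral_const_mul,
          integral_pow, smul_eq_mul]
        push_cast
        ring
      rw [this]; ring
    · refine (ae_restrict_iff' measurableSet_Ioc).mpr
        (Filter.Eventually.of_forall fun t ht => ?_)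
      have h1 := ht.1
      have h2 := ht.2
      show (0:ℝ) ≤ Real.pi * r ^ 2 - Real.pi * t ^ 2
      nlinarith [mul_nonneg Real.pi_pos.le (show (0:ℝ) ≤ r ^ 2 - t ^ 2 by nlinarith)]
  · rw [layercake _ measurableSet_closedBall, layercake _ hS]
    refine lintegral_mono_ae ?_
    filter_upwards [ae_restrict_mem measurableSet_Ioi] with t (ht : 0 < t)
    rcases le_or_gt t r with htr | htr
    · rw [hball t ht]
      have hSt : volume S ≤ volume (S \ Metric.closedBall (0 : E) t)
          + volume (Metric.closedBall (0 : E) t) := by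
        calc volume S = volume (S ∩ Metric.closedBall (0 : E) t)
              + volume (S \ Metric.closedBall (0 : E) t) :=
            (measure_inter_add_diff S measurableSet_closedBall).symm
          _ ≤ _ := by
            rw [add_comm]
            exact add_le_add le_rfl (measure_mono Set.inter_subset_right)
      have : ENNReal.ofReal (Real.pi * r ^ 2 - Real.pi * t ^ 2)
          = volume S - volume (Metric.closedBall (0 : E) t) := by
        rw [hvol, volB t ht.le, ← ENNReal.ofReal_sub _ (by positivity)]
      rw [this]
      exact tsub_le_iff_right.mpr hSt
    · rw [Set.diff_eq_empty.mpr (Metric.closedBall_subset_closedBall htr.le),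
        measure_empty]
      exact zero_le
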